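/- arXiv:0811.1654 — 12 statements merged into one kernel-verified Lean document; each statement's English description precedes it below -/
import Mathlib

section
/- Let (X, T, D) be a rank-r MGDS satisfying (DC). Suppose x ∈ D m, y ∈ D n with T m x = T n y, and y ∈ D m', z ∈ D n' with T m' y = T n' z (m, n, m', n' ∈ ℕ^r). Then y ∈ D (n ⊔ m'), x ∈ D (m + (n ⊔ m') − n), z ∈ D (n' + (n ⊔ m') − m'), and T (m + (n ⊔ m') − n) x = T (n' + (n ⊔ m') − m') z. (Consequently the semidirect product set G(X,T) = {(x, m−n, y) ∈ X × ℤ^r × X : ∃ m n ∈ ℕ^r, x ∈ D m, y ∈ D n, T m x = T n y} is closed under the composition (x,z,y)(y,z',w) = (x, z+z', w).) -/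
/-- A multiply generated dynamical system (MGDS) of rank `r` on a set `X`:
a family of subsets `D n ⊆ X` and maps `T n : X → X` indexed by `n ∈ ℕ^r`
such that `D 0 = X`, `T 0 = id`, `D (m+n) = {x ∈ D n | T n x ∈ D m}` and
`T (m+n) x = T m (T n x)` on `D (m+n)`. -/
structure MGDS (r : ℕ) (X : Type*) where
  D : (Fin r → ℕ) → Set X
  T : (Fin r → ℕ) → X → X
  D_zero : D 0 = Set.univ
  T_zero : ∀ x, T 0 x = x
  D_add : ∀ m n, D (m + n) = {x ∈ D n | T n x ∈ D m}
  T_add : ∀ m n, ∀ x ∈ D (m + n), T (m + n) x = T m (T n x)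

/-- The domain condition (DC): `D m ∩ D n ⊆ D (m ⊔ n)` where `⊔` is the
coordinatewise maximum. -/
def MGDS.DC {r : ℕ} {X : Type*} (S : MGDS r X) : Prop :=
  ∀ m n : Fin r → ℕ, S.D m ∩ S.D n ⊆ S.D (m ⊔ n)

/-- in an MGDS with (DC), if `T m x = T n y` and `T m' y = T n' z`,
then `y ∈ D (n ⊔ m')`, `x ∈ D (m + (n ⊔ m') - n)`, `z ∈ D (n' + (n ⊔ m') - m')`, and
`T (m + (n ⊔ m') - n) x = T (n' + (n ⊔ m') - m') z`.  Consequently the semidirect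
product set `G(X,T)` is closed under composition. -/
theorem mgds_semidirect_closed_under_composition
    {r : ℕ} {X : Type*} (S : MGDS r X) (hDC : S.DC)
    (m n m' n' : Fin r → ℕ) (x y z : X)
    (hx : x ∈ S.D m) (hy : y ∈ S.D n) (hxy : S.T m x = S.T n y)
    (hy' : y ∈ S.D m') (hz : z ∈ S.D n') (hyz : S.T m' y = S.T n' z) :
    y ∈ S.D (n ⊔ m') ∧
    x ∈ S.D (m + (n ⊔ m') - n) ∧
    z ∈ S.D (n' + (n ⊔ m') - m') ∧
    S.T (m + (n ⊔ m') - n) x = S.T (n' + (n ⊔ m') - m') z := by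

  set k := (n ⊔ m') - n with hk
  set k' := (n ⊔ m') - m' with hk'
  have hnk : n + k = n ⊔ m' := add_tsub_cancel_of_le le_sup_left
  have hmk' : m' + k' = n ⊔ m' := add_tsub_cancel_of_le le_sup_right
  have e1 : m + (n ⊔ m') - n = k + m := by
    rw [add_tsub_assoc_of_le (le_sup_left : n ≤ n ⊔ m'), add_comm]
  have e2 : n' + (n ⊔ m') - m' = k' + n' := by
    rw [add_tsub_assoc_of_le (le_sup_right : m' ≤ n ⊔ m'), add_comm]
  have hySup : y ∈ S.D (n ⊔ m') := hDC n m' ⟨hy, hy'⟩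
  -- y ∈ D (k + n)
  have hyk : y ∈ S.D (k + n) := by rw [add_comm, hnk]; exact hySup
  have hyk' : y ∈ S.D (k' + m') := by rw [add_comm, hmk']; exact hySup
  have hTny : S.T n y ∈ S.D k := ((S.D_add k n ▸ hyk) : _).2
  have hTm'y : S.T m' y ∈ S.D k' := ((S.D_add k' m' ▸ hyk') : _).2
  have hxk : x ∈ S.D (k + m) := by
    rw [S.D_add]; exact ⟨hx, hxy ▸ hTny⟩
  have hzk : z ∈ S.D (k' + n') := by
    rw [S.D_add]; exact ⟨hz, hyz ▸ hTm'y⟩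
  refine ⟨hySup, e1 ▸ hxk, e2 ▸ hzk, ?_⟩
  rw [e1, e2, S.T_add k m x hxk, S.T_add k' n' z hzk, hxy, ← hyz,
    ← S.T_add k n y hyk, ← S.T_add k' m' y hyk', add_comm k n, hnk,
    add_comm k' m', hmk']
end

section
/- Let (X, T, D) be a rank-r MGDS satisfying (DC). Suppose m, n, m', n' ∈ ℕ^r satisfy m − n = m' − n' in ℤ^r, and x ∈ D m ∩ D m', y ∈ D n ∩ D n' are such that T m x = T n y and T m' x = T n' y. Then x ∈ D (m ⊔ m'), y ∈ D (n ⊔ n'), and T (m ⊔ m') x = T (n ⊔ n') y. (This is the inclusion 𝒰(U;m,n;V) ∩ 𝒰(U';m',n';V') ⊇ 𝒰(U∩U'; m⊔m', n⊔n'; V∩V') showing that the basic sets of the semidirect product groupoid form a basis for a topology.) -/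
/-- in an MGDS with (DC), if `m - n = m' - n'` in `ℤ^r`,
`x ∈ D m ∩ D m'`, `y ∈ D n ∩ D n'`, `T m x = T n y` and `T m' x = T n' y`, then
`x ∈ D (m ⊔ m')`, `y ∈ D (n ⊔ n')` and `T (m ⊔ m') x = T (n ⊔ n') y`.
(This is the inclusion `𝒰(U;m,n;V) ∩ 𝒰(U';m',n';V') ⊇ 𝒰(U∩U'; m⊔m', n⊔n'; V∩V')`.) -/
theorem mgds_basic_sets_form_basis
    {r : ℕ} {X : Type*} (S : MGDS r X) (hDC : S.DC)
    (m n m' n' : Fin r → ℕ)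
    (hdiff : ∀ i, (m i : ℤ) - (n i : ℤ) = (m' i : ℤ) - (n' i : ℤ))
    (x y : X)
    (hx : x ∈ S.D m ∩ S.D m') (hy : y ∈ S.D n ∩ S.D n')
    (h1 : S.T m x = S.T n y) (h2 : S.T m' x = S.T n' y) :
    x ∈ S.D (m ⊔ m') ∧ y ∈ S.D (n ⊔ n') ∧ S.T (m ⊔ m') x = S.T (n ⊔ n') y := by
  have hxm : x ∈ S.D (m ⊔ m') := hDC m m' hx
  have hyn : y ∈ S.D (n ⊔ n') := hDC n n' hy
  set k : Fin r → ℕ := fun i => max (m i) (m' i) - m i with hk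
  have hk1 : k + m = m ⊔ m' := by
    funext i
    simp only [Pi.add_apply, Pi.sup_apply, hk]
    omega
  have hk2 : k + n = n ⊔ n' := by
    funext i
    have := hdiff i
    simp only [Pi.add_apply, Pi.sup_apply, hk]
    omega
  refine ⟨hxm, hyn, ?_⟩
  have e1 : S.T (m ⊔ m') x = S.T k (S.T m x) := by
    rw [← hk1]; exact S.T_add k m x (hk1 ▸ hxm)
  have e2 : S.T (n ⊔ n') y = S.T k (S.T n y) := by
    rw [← hk2]; exact S.T_add k n y (hk2 ▸ hyn)
  rw [e1, e2, h1]
end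

section
/- Let (X, T, D) be a rank-r MGDS satisfying (DC). Let m, n, p, q ∈ ℕ^r with m − n = p − q in ℤ^r, let U ⊆ D m ∩ D p be a set on which T (m ⊔ p) is injective, and let x ∈ D n ∩ D q, y, y' ∈ U satisfy T m y = T n x and T p y' = T q x. Then y = y'. (This is the uniqueness underlying the fact that two partial homeomorphisms (T^m|U)^{-1}T^n and (T^p|U)^{-1}T^q with m − n = p − q agreeing at a point have the same germ there.) -/
/-- in an MGDS with (DC), let `m - n = p - q` in `ℤ^r`, let
`U ⊆ D m ∩ D p` be a set on which `T (m ⊔ p)` is injective, and let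
`x ∈ D n ∩ D q`, `y, y' ∈ U` with `T m y = T n x` and `T p y' = T q x`.
Then `y = y'`.  (Uniqueness behind the statement that two partial homeomorphisms
`(T^m|U)⁻¹T^n` and `(T^p|U)⁻¹T^q` with `m - n = p - q` agreeing at a point have
the same germ there.) -/
theorem mgds_same_germ_uniqueness
    {r : ℕ} {X : Type*} (S : MGDS r X) (hDC : S.DC)
    (m n p q : Fin r → ℕ)
    (hdiff : ∀ i, (m i : ℤ) - (n i : ℤ) = (p i : ℤ) - (q i : ℤ))
    (U : Set X) (hU : U ⊆ S.D m ∩ S.D p)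
    (hinj : Set.InjOn (S.T (m ⊔ p)) U)
    (x y y' : X) (hx : x ∈ S.D n ∩ S.D q) (hy : y ∈ U) (hy' : y' ∈ U)
    (h1 : S.T m y = S.T n x) (h2 : S.T p y' = S.T q x) :
    y = y' := by
  set s := m ⊔ p with hs
  have hsm : s - m + m = s := by
    funext i
    exact Nat.sub_add_cancel (le_max_left _ _)
  have hsp : s - p + p = s := by
    funext i
    exact Nat.sub_add_cancel (le_max_right _ _)
  have hys : y ∈ S.D s := hDC m p (hU hy)
  have hy's : y' ∈ S.D s := hDC m p (hU hy')
  -- y ∈ D ((s-m)+m) gives T m y ∈ D (s-m)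
  have hy1 : S.T m y ∈ S.D (s - m) := by
    have := hys; rw [← hsm, S.D_add] at this; exact this.2
  have hy'1 : S.T p y' ∈ S.D (s - p) := by
    have := hy's; rw [← hsp, S.D_add] at this; exact this.2
  have hx1 : x ∈ S.D (s - m + n) := by
    rw [S.D_add]; exact ⟨hx.1, h1 ▸ hy1⟩
  have hx2 : x ∈ S.D (s - p + q) := by
    rw [S.D_add]; exact ⟨hx.2, h2 ▸ hy'1⟩
  have key : s - m + n = s - p + q := by
    funext i
    have hi := hdiff i
    simp only [hs, Pi.sup_apply, Pi.add_apply, Pi.sub_apply]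
    have := Nat.le_max_left (m i) (p i)
    have := Nat.le_max_right (m i) (p i)
    omega
  have e1 : S.T s y = S.T (s - m + n) x := by
    calc S.T s y = S.T (s - m + m) y := by rw [hsm]
    _ = S.T (s - m) (S.T m y) := S.T_add _ _ y (by rw [hsm]; exact hys)
    _ = S.T (s - m) (S.T n x) := by rw [h1]
    _ = S.T (s - m + n) x := (S.T_add _ _ x hx1).symm
  have e2 : S.T s y' = S.T (s - p + q) x := by
    calc S.T s y' = S.T (s - p + p) y' := by rw [hsp]
    _ = S.T (s - p) (S.T p y') := S.T_add _ _ y' (by rw [hsp]; exact hy's)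
    _ = S.T (s - p) (S.T q x) := by rw [h2]
    _ = S.T (s - p + q) x := (S.T_add _ _ x hx2).symm
  exact hinj hy hy' (by rw [e1, e2, key])
end

section
/- Let X be a topological space and (X, T, D) a rank-r MGDS satisfying (DC) which is essentially free. Let m, n, p, q ∈ ℕ^r, let O ⊆ X be a nonempty open set, and let f : X → X be a map such that for every x ∈ O one has x ∈ D n ∩ D q, f x ∈ D m ∩ D p, T m (f x) = T n x, and T p (f x) = T q x. Then n − m = q − p in ℤ^r. -/
/-- Essential freeness: for every pair of distinct `m, n ∈ ℕ^r` there is no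
nonempty open set `O ⊆ D m ∩ D n` on which `T m` and `T n` agree. -/
def MGDS.EssentiallyFree {r : ℕ} {X : Type*} [TopologicalSpace X] (S : MGDS r X) : Prop :=
  ∀ m n : Fin r → ℕ, m ≠ n →
    ¬ ∃ O : Set X, IsOpen O ∧ O.Nonempty ∧ O ⊆ S.D m ∩ S.D n ∧ ∀ x ∈ O, S.T m x = S.T n x

/-- in an essentially free MGDS with (DC), if on a nonempty open set
`O` a map `f` satisfies `T m (f x) = T n x` and `T p (f x) = T q x` (with the
stated domain conditions), then `n - m = q - p` in `ℤ^r`. -/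
theorem mgds_essentially_free_germ_degree
    {r : ℕ} {X : Type*} [TopologicalSpace X] (S : MGDS r X)
    (hDC : S.DC) (hEF : S.EssentiallyFree)
    (m n p q : Fin r → ℕ) (O : Set X) (hO : IsOpen O) (hne : O.Nonempty)
    (f : X → X)
    (h : ∀ x ∈ O, x ∈ S.D n ∩ S.D q ∧ f x ∈ S.D m ∩ S.D p ∧
      S.T m (f x) = S.T n x ∧ S.T p (f x) = S.T q x) :
    ∀ i, (n i : ℤ) - (m i : ℤ) = (q i : ℤ) - (p i : ℤ) := by
  set s : Fin r → ℕ := m ⊔ p with hs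
  set a : Fin r → ℕ := s - m with ha
  set b : Fin r → ℕ := s - p with hb
  have ham : a + m = s := by
    funext i
    simp only [ha, hs, Pi.add_apply, Pi.sub_apply, Pi.sup_apply]
    omega
  have hbp : b + p = s := by
    funext i
    simp only [hb, hs, Pi.add_apply, Pi.sub_apply, Pi.sup_apply]
    omega
  -- key facts for each x ∈ O
  have key : ∀ x ∈ O, x ∈ S.D (a + n) ∧ x ∈ S.D (b + q) ∧
      S.T (a + n) x = S.T (b + q) x := by
    intro x hx
    obtain ⟨⟨hxn, hxq⟩, ⟨hfm, hfp⟩, e1, e2⟩ := h x hx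
    have hfs : f x ∈ S.D s := hDC m p ⟨hfm, hfp⟩
    have hfs' : f x ∈ S.D (a + m) := by rw [ham]; exact hfs
    have hfs'' : f x ∈ S.D (b + p) := by rw [hbp]; exact hfs
    have hTm : S.T m (f x) ∈ S.D a := by
      have := (S.D_add a m) ▸ hfs'
      exact this.2
    have hTp : S.T p (f x) ∈ S.D b := by
      have := (S.D_add b p) ▸ hfs''
      exact this.2
    have hxan : x ∈ S.D (a + n) := by
      rw [S.D_add a n]; exact ⟨hxn, e1 ▸ hTm⟩
    have hxbq : x ∈ S.D (b + q) := by
      rw [S.D_add b q]; exact ⟨hxq, e2 ▸ hTp⟩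
    refine ⟨hxan, hxbq, ?_⟩
    have t1 : S.T (a + n) x = S.T a (S.T n x) := S.T_add a n x hxan
    have t2 : S.T (b + q) x = S.T b (S.T q x) := S.T_add b q x hxbq
    have t3 : S.T (a + m) (f x) = S.T a (S.T m (f x)) := S.T_add a m (f x) hfs'
    have t4 : S.T (b + p) (f x) = S.T b (S.T p (f x)) := S.T_add b p (f x) hfs''
    rw [t1, t2, ← e1, ← e2, ← t3, ← t4, ham, hbp]
  have heq : a + n = b + q := by
    by_contra hne'
    exact hEF (a + n) (b + q) hne'
      ⟨O, hO, hne, fun x hx => ⟨(key x hx).1, (key x hx).2.1⟩,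
        fun x hx => (key x hx).2.2⟩
  intro i
  have h1 := congrFun heq i
  have h2 := congrFun ham i
  have h3 := congrFun hbp i
  simp only [Pi.add_apply] at h1 h2 h3
  omega
end

section
/- Let X be a topological space and (X, T, D) a rank-r MGDS satisfying (DC). Then the MGDS is essentially free if and only if the following holds: for all m, n, p, q ∈ ℕ^r, every nonempty open set O ⊆ X, and every map f : X → X such that for every x ∈ O one has x ∈ D n ∩ D q, f x ∈ D m ∩ D p, T m (f x) = T n x, and T p (f x) = T q x, one has m − n = p − q in ℤ^r. (This is the content of the statement that the canonical surjection from the semidirect product groupoid G(X,T) onto the groupoid of germs Germ(X,T) is an isomorphism exactly when (X,T) is essentially free.) -/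
/-- an MGDS with (DC) on a topological space is essentially free if
and only if whenever a map `f` satisfies, on a nonempty open set `O`,
`T m (f x) = T n x` and `T p (f x) = T q x` (with the stated domain conditions),
one has `m - n = p - q` in `ℤ^r`.  (This is the content of the statement that the
canonical surjection `G(X,T) → Germ(X,T)` is an isomorphism exactly when `(X,T)`
is essentially free.) -/
theorem mgds_essentially_free_iff_germ_degree
    {r : ℕ} {X : Type*} [TopologicalSpace X] (S : MGDS r X) (hDC : S.DC) :
    S.EssentiallyFree ↔
      (∀ (m n p q : Fin r → ℕ) (O : Set X), IsOpen O → O.Nonempty →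
        ∀ f : X → X,
          (∀ x ∈ O, x ∈ S.D n ∩ S.D q ∧ f x ∈ S.D m ∩ S.D p ∧
            S.T m (f x) = S.T n x ∧ S.T p (f x) = S.T q x) →
          ∀ i, (m i : ℤ) - (n i : ℤ) = (p i : ℤ) - (q i : ℤ)) := by
  constructor
  · intro hEF m n p q O hO hne f hf i
    set k : Fin r → ℕ := m ⊔ p with hk
    have hkm : (k - m) + m = k := by
      funext j; exact Nat.sub_add_cancel (le_max_left _ _)
    have hkp : (k - p) + p = k := by
      funext j; exact Nat.sub_add_cancel (le_max_right _ _)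
    set a : Fin r → ℕ := (k - m) + n with ha
    set b : Fin r → ℕ := (k - p) + q with hb
    -- key facts on O
    have key : ∀ x ∈ O, x ∈ S.D a ∩ S.D b ∧ S.T a x = S.T b x := by
      intro x hx
      obtain ⟨⟨hxn, hxq⟩, ⟨hfm, hfp⟩, h1, h2⟩ := hf x hx
      have hfk : f x ∈ S.D k := hDC m p ⟨hfm, hfp⟩
      have hfkm : f x ∈ S.D ((k - m) + m) := by rw [hkm]; exact hfk
      have hfkp : f x ∈ S.D ((k - p) + p) := by rw [hkp]; exact hfk
      have hTm : S.T m (f x) ∈ S.D (k - m) := by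
        rw [S.D_add] at hfkm; exact hfkm.2
      have hTp : S.T p (f x) ∈ S.D (k - p) := by
        rw [S.D_add] at hfkp; exact hfkp.2
      have hxa : x ∈ S.D a := by
        rw [ha, S.D_add]; exact ⟨hxn, h1 ▸ hTm⟩
      have hxb : x ∈ S.D b := by
        rw [hb, S.D_add]; exact ⟨hxq, h2 ▸ hTp⟩
      refine ⟨⟨hxa, hxb⟩, ?_⟩
      have e1 : S.T a x = S.T (k - m) (S.T n x) := S.T_add _ _ x hxa
      have e2 : S.T b x = S.T (k - p) (S.T q x) := S.T_add _ _ x hxb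
      have e3 : S.T ((k - m) + m) (f x) = S.T (k - m) (S.T m (f x)) :=
        S.T_add _ _ (f x) hfkm
      have e4 : S.T ((k - p) + p) (f x) = S.T (k - p) (S.T p (f x)) :=
        S.T_add _ _ (f x) hfkp
      rw [e1, e2, ← h1, ← h2, ← e3, ← e4, hkm, hkp]
    have hab : a = b := by
      by_contra habne
      exact hEF a b habne ⟨O, hO, hne, fun x hx => (key x hx).1,
        fun x hx => (key x hx).2⟩
    have hi : (k i - m i) + n i = (k i - p i) + q i := congrFun hab i
    have h1 : m i ≤ k i := le_max_left _ _
    have h2 : p i ≤ k i := le_max_right _ _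
    omega
  · intro h m n hmn ⟨O, hO, hne, hsub, hagree⟩
    have := h m n 0 0 O hO hne id (fun x hx => by
      have hx' := hsub hx
      refine ⟨⟨hx'.2, by rw [S.D_zero]; trivial⟩,
        ⟨hx'.1, by rw [S.D_zero]; trivial⟩, hagree x hx, rfl⟩)
    apply hmn
    funext i
    have := this i
    omega
end

section
/- Let (X, T, D) be a rank-r MGDS satisfying (DC). For every x ∈ X, n ∈ ℕ^r with x ∈ D n, and every coordinate j ∈ {1,…,r}, one has σ(T n x)_j + n_j = σ(x)_j in ℕ∞ (that is, σ(T n x) = σ(x) − n). -/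
/-- The exit time `σ(x) ∈ (ℕ∞)^r`: coordinatewise,
`σ(x)_j = sup { n_j : n ∈ ℕ^r, x ∈ D n }`, the supremum taken in `ℕ∞`. -/
noncomputable def MGDS.exitTime {r : ℕ} {X : Type*} (S : MGDS r X) (x : X) : Fin r → ℕ∞ :=
  fun j => ⨆ (n : Fin r → ℕ) (_ : x ∈ S.D n), (n j : ℕ∞)

lemma hxmn_aux {r : ℕ} {X : Type*} (S : MGDS r X) (n : Fin r → ℕ) (x : X)
    {m : Fin r → ℕ} (h : x ∈ S.D (m + n)) : S.T n x ∈ S.D m := by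
  rw [S.D_add] at h; exact h.2

/-- in an MGDS with (DC), for `x ∈ D n` one has
`σ(T n x)_j + n_j = σ(x)_j` in `ℕ∞` for every coordinate `j`
(that is, `σ(T n x) = σ(x) - n`). -/
theorem mgds_exitTime_shift
    {r : ℕ} {X : Type*} (S : MGDS r X) (hDC : S.DC)
    (x : X) (n : Fin r → ℕ) (hx : x ∈ S.D n) :
    ∀ j, S.exitTime (S.T n x) j + (n j : ℕ∞) = S.exitTime x j := by
  intro j
  have h0 : S.T n x ∈ S.D 0 := by rw [S.D_zero]; trivial
  rw [MGDS.exitTime, ENat.biSup_add' (p := fun m => S.T n x ∈ S.D m) ⟨0, h0⟩ (fun m => (m j : ℕ∞))]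
  apply le_antisymm
  · refine iSup₂_le fun m hm => ?_
    have hxmn : x ∈ S.D (m + n) := by
      rw [S.D_add]; exact ⟨hx, hm⟩
    have : ((m + n) j : ℕ∞) ≤ S.exitTime x j :=
      le_iSup₂ (f := fun k (_ : x ∈ S.D k) => (k j : ℕ∞)) (m + n) hxmn
    simpa using this
  · refine iSup₂_le fun k hk => ?_
    have hkn : x ∈ S.D (k ⊔ n) := hDC k n ⟨hk, hx⟩
    set m : Fin r → ℕ := k ⊔ n - n with hm
    have hmn : m + n = k ⊔ n := by
      funext i
      exact Nat.sub_add_cancel (le_sup_right : n i ≤ (k ⊔ n) i)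
    have hTm : S.T n x ∈ S.D m := by
      have := hxmn_aux S n x (m := m) (by rw [hmn]; exact hkn)
      exact this
    have hle : (k j : ℕ∞) ≤ (m j + n j : ℕ) := by
      have : k j ≤ m j + n j := by
        have : k j ≤ (k ⊔ n) j := le_sup_left
        rwa [← hmn] at this
      exact_mod_cast this
    calc (k j : ℕ∞) ≤ ((m j : ℕ∞) + (n j : ℕ∞)) := by push_cast at hle ⊢; exact hle
      _ ≤ ⨆ m', ⨆ _ : S.T n x ∈ S.D m', ((m' j : ℕ∞) + n j) :=
        le_iSup₂ (f := fun m' (_ : S.T n x ∈ S.D m') => ((m' j : ℕ∞) + n j)) m hTm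
end

section
/- Let (X, T, D) be a rank-r MGDS satisfying (DC). Suppose x ∈ D m, y ∈ D n and T m x = T n y (m, n ∈ ℕ^r). Then for every coordinate j one has σ(x)_j + n_j = σ(y)_j + m_j in ℕ∞; in particular σ(x)_j is finite if and only if σ(y)_j is finite, and in that case m_j − n_j = σ(x)_j − σ(y)_j in ℤ. (This says that for an element (x, z, y) of the semidirect product groupoid, the coordinates of z at indices where the exit time is finite are determined by x and y.) -/
private lemma mgds_key {r : ℕ} {X : Type*} (S : MGDS r X) (hDC : S.DC)
    (m n : Fin r → ℕ) (x y : X)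
    (hx : x ∈ S.D m) (hy : y ∈ S.D n) (hxy : S.T m x = S.T n y) (j : Fin r) :
    S.exitTime x j + (n j : ℕ∞) ≤ S.exitTime y j + (m j : ℕ∞) := by
  have hex : ∃ k : Fin r → ℕ, x ∈ S.D k := ⟨m, hx⟩
  rw [MGDS.exitTime, ENat.biSup_add' hex]
  refine iSup_le fun k => iSup_le fun hk => ?_
  set p : Fin r → ℕ := (k ⊔ m) - m with hp
  have hpm : p + m = k ⊔ m := by
    funext i
    exact Nat.sub_add_cancel (le_sup_right : m i ≤ k i ⊔ m i)
  have hxkm : x ∈ S.D (p + m) := by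
    rw [hpm]; exact hDC k m ⟨hk, hx⟩
  have hTmx : S.T m x ∈ S.D p := by
    rw [S.D_add p m] at hxkm; exact hxkm.2
  have hypn : y ∈ S.D (p + n) := by
    rw [S.D_add p n]
    exact ⟨hy, by rw [← hxy]; exact hTmx⟩
  have hσy : ((p + n) j : ℕ∞) ≤ S.exitTime y j :=
    le_iSup_of_le (p + n) (by simp [hypn])
  have hk' : k j ≤ p j + m j := by
    have : p j + m j = max (k j) (m j) := congrFun hpm j
    omega
  calc (k j : ℕ∞) + n j ≤ ((p j + m j : ℕ) : ℕ∞) + n j := by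
        exact_mod_cast add_le_add_left (Nat.cast_le.2 hk') _
    _ = ((p + n) j : ℕ∞) + m j := by push_cast [Pi.add_apply]; ring
    _ ≤ S.exitTime y j + m j := add_le_add_left hσy _

/-- in an MGDS with (DC), if `x ∈ D m`, `y ∈ D n` and
`T m x = T n y`, then `σ(x)_j + n_j = σ(y)_j + m_j` in `ℕ∞` for all `j`; in
particular `σ(x)_j` is finite iff `σ(y)_j` is, and then
`m_j - n_j = σ(x)_j - σ(y)_j` in `ℤ`. -/
theorem mgds_cocycle_determined_on_finite_coordinates
    {r : ℕ} {X : Type*} (S : MGDS r X) (hDC : S.DC)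
    (m n : Fin r → ℕ) (x y : X)
    (hx : x ∈ S.D m) (hy : y ∈ S.D n) (hxy : S.T m x = S.T n y) :
    ∀ j, S.exitTime x j + (n j : ℕ∞) = S.exitTime y j + (m j : ℕ∞) ∧
      (S.exitTime x j ≠ ⊤ ↔ S.exitTime y j ≠ ⊤) ∧
      (S.exitTime x j ≠ ⊤ →
        (m j : ℤ) - (n j : ℤ) =
          ((S.exitTime x j).toNat : ℤ) - ((S.exitTime y j).toNat : ℤ)) := by
  intro j
  have h1 := mgds_key S hDC m n x y hx hy hxy j
  have h2 := mgds_key S hDC n m y x hy hx hxy.symm j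
  have heq : S.exitTime x j + (n j : ℕ∞) = S.exitTime y j + (m j : ℕ∞) :=
    le_antisymm h1 h2
  have hfin : ∀ (a : ℕ∞) (k : ℕ), a + (k : ℕ∞) = ⊤ ↔ a = ⊤ := by
    intro a k
    induction a using ENat.recTopCoe with
    | top => simp
    | coe a =>
      simp only [← Nat.cast_add]
      exact iff_of_false (ENat.coe_ne_top _) (ENat.coe_ne_top _)
  have hiff : S.exitTime x j ≠ ⊤ ↔ S.exitTime y j ≠ ⊤ := by
    constructor
    · intro hx' hy'
      exact hx' ((hfin _ _).1 (heq.trans ((hfin _ _).2 hy')))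
    · intro hy' hx'
      exact hy' ((hfin _ _).1 (heq.symm.trans ((hfin _ _).2 hx')))
  refine ⟨heq, hiff, ?_⟩
  intro hx'
  have hy' : S.exitTime y j ≠ ⊤ := hiff.1 hx'
  have ha := ENat.coe_toNat hx'
  have hb := ENat.coe_toNat hy'
  rw [← ha, ← hb] at heq
  have : (S.exitTime x j).toNat + n j = (S.exitTime y j).toNat + m j := by
    exact_mod_cast heq
  omega
end

section
/- Let (X, T, D) be a rank-r MGDS satisfying (DC) and let J ⊆ {1,…,r}. Let X_J = { x ∈ X : σ(x)_j = ∞ if and only if j ∈ J }. Then the relation R_J on X_J defined by: x R_J y if and only if there exist m, n ∈ ℕ^r with m_j = n_j for all j ∈ J, x ∈ D m, y ∈ D n, and T m x = T n y, is an equivalence relation on X_J (reflexive, symmetric, and transitive). -/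
/-- in an MGDS with (DC), for `J ⊆ {1,…,r}`, on the set
`X_J = {x : σ(x)_j = ∞ ↔ j ∈ J}` the relation
`x R_J y ↔ ∃ m n, (m_j = n_j ∀ j ∈ J) ∧ x ∈ D m ∧ y ∈ D n ∧ T m x = T n y`
is an equivalence relation (reflexive, symmetric and transitive). -/
theorem mgds_RJ_equivalence
    {r : ℕ} {X : Type*} (S : MGDS r X) (hDC : S.DC) (J : Set (Fin r)) :
    let XJ : Set X := {x | ∀ j, S.exitTime x j = ⊤ ↔ j ∈ J}
    let R : X → X → Prop := fun x y => ∃ m n : Fin r → ℕ,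
      (∀ j ∈ J, m j = n j) ∧ x ∈ S.D m ∧ y ∈ S.D n ∧ S.T m x = S.T n y
    (∀ x ∈ XJ, R x x) ∧
    (∀ x ∈ XJ, ∀ y ∈ XJ, R x y → R y x) ∧
    (∀ x ∈ XJ, ∀ y ∈ XJ, ∀ z ∈ XJ, R x y → R y z → R x z) := by
  intro XJ R
  refine ⟨?_, ?_, ?_⟩
  · intro x _
    exact ⟨0, 0, fun j _ => rfl, by simp [S.D_zero], by simp [S.D_zero], rfl⟩
  · rintro x _ y _ ⟨m, n, h, hx, hy, ht⟩
    exact ⟨n, m, fun j hj => (h j hj).symm, hy, hx, ht.symm⟩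
  · rintro x _ y _ z _ ⟨m, n, hmn, hx, hy, ht1⟩ ⟨p, q, hpq, hy', hz, ht2⟩
    set a : Fin r → ℕ := fun j => max (n j) (p j) - n j with ha
    set b : Fin r → ℕ := fun j => max (n j) (p j) - p j with hb
    have hna : n + a = n ⊔ p := by
      funext j; simp only [ha, Pi.add_apply, Pi.sup_apply]; omega
    have hpb : p + b = n ⊔ p := by
      funext j; simp only [hb, Pi.add_apply, Pi.sup_apply]; omega
    have hysup : y ∈ S.D (n ⊔ p) := hDC n p ⟨hy, hy'⟩
    have hyna : y ∈ S.D (a + n) := by rw [add_comm, hna]; exact hysup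
    have hypb : y ∈ S.D (b + p) := by rw [add_comm, hpb]; exact hysup
    have h1 : S.T n y ∈ S.D a := by
      have := hyna; rw [S.D_add] at this; exact this.2
    have h2 : S.T p y ∈ S.D b := by
      have := hypb; rw [S.D_add] at this; exact this.2
    have hxam : x ∈ S.D (a + m) := by
      rw [S.D_add]; exact ⟨hx, by rw [ht1]; exact h1⟩
    have hzbq : z ∈ S.D (b + q) := by
      rw [S.D_add]; exact ⟨hz, by rw [← ht2]; exact h2⟩
    refine ⟨a + m, b + q, ?_, hxam, hzbq, ?_⟩
    · intro j hj
      have e1 := hmn j hj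
      have e2 := hpq j hj
      simp only [Pi.add_apply, ha, hb]; omega
    · calc S.T (a + m) x = S.T a (S.T m x) := S.T_add a m x hxam
        _ = S.T a (S.T n y) := by rw [ht1]
        _ = S.T (a + n) y := (S.T_add a n y hyna).symm
        _ = S.T (b + p) y := by rw [add_comm a n, hna, ← hpb, add_comm p b]
        _ = S.T b (S.T p y) := S.T_add b p y hypb
        _ = S.T b (S.T q z) := by rw [ht2]
        _ = S.T (b + q) z := (S.T_add b q z hzbq).symm
end

section
/- Let (X, T, D) be a rank-r MGDS satisfying (DC), let J ⊆ {1,…,r}, let X_J = { x ∈ X : σ(x)_j = ∞ if and only if j ∈ J }, and let N ∈ ℕ^r. Define the relation R_J^N on X_J by: x R_J^N y if and only if there exist m, n ∈ ℕ^r with m_j = n_j ≤ N_j for all j ∈ J, x ∈ D m, y ∈ D n, and T m x = T n y. Then (i) R_J^N is an equivalence relation on X_J; (ii) R_J^N ⊆ R_J^{N'} whenever N ≤ N' coordinatewise; and (iii) the union of the R_J^N over all N ∈ ℕ^r equals the relation R_J (defined by the same condition without the bound ≤ N_j). -/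
/-- in an MGDS with (DC), for `J ⊆ {1,…,r}` and `N ∈ ℕ^r`, the
bounded relation `R_J^N` on `X_J` (requiring `m_j = n_j ≤ N_j` for `j ∈ J`) is an
equivalence relation; `R_J^N ⊆ R_J^{N'}` for `N ≤ N'`; and the union of the
`R_J^N` over all `N ∈ ℕ^r` is the relation `R_J`. -/
theorem mgds_RJN_equivalence_monotone_union
    {r : ℕ} {X : Type*} (S : MGDS r X) (hDC : S.DC) (J : Set (Fin r)) :
    let XJ : Set X := {x | ∀ j, S.exitTime x j = ⊤ ↔ j ∈ J}
    let RN : (Fin r → ℕ) → X → X → Prop := fun N x y => ∃ m n : Fin r → ℕ,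
      (∀ j ∈ J, m j = n j ∧ n j ≤ N j) ∧ x ∈ S.D m ∧ y ∈ S.D n ∧ S.T m x = S.T n y
    let R : X → X → Prop := fun x y => ∃ m n : Fin r → ℕ,
      (∀ j ∈ J, m j = n j) ∧ x ∈ S.D m ∧ y ∈ S.D n ∧ S.T m x = S.T n y
    (∀ N : Fin r → ℕ,
      (∀ x ∈ XJ, RN N x x) ∧
      (∀ x ∈ XJ, ∀ y ∈ XJ, RN N x y → RN N y x) ∧
      (∀ x ∈ XJ, ∀ y ∈ XJ, ∀ z ∈ XJ, RN N x y → RN N y z → RN N x z)) ∧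
    (∀ N N' : Fin r → ℕ, N ≤ N' →
      ∀ x ∈ XJ, ∀ y ∈ XJ, RN N x y → RN N' x y) ∧
    (∀ x ∈ XJ, ∀ y ∈ XJ, ((∃ N : Fin r → ℕ, RN N x y) ↔ R x y)) := by
  intro XJ RN R
  refine ⟨fun N => ⟨?_, ?_, ?_⟩, ?_, ?_⟩
  · -- reflexivity
    intro x _
    exact ⟨0, 0, fun j _ => ⟨rfl, Nat.zero_le _⟩, by simp [S.D_zero], by simp [S.D_zero], rfl⟩
  · -- symmetry
    rintro x _ y _ ⟨m, n, hJ, hx, hy, he⟩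
    exact ⟨n, m, fun j hj => ⟨(hJ j hj).1.symm, (hJ j hj).1 ▸ (hJ j hj).2⟩, hy, hx, he.symm⟩
  · -- transitivity
    rintro x _ y _ z _ ⟨m, n, hJ, hx, hy, he⟩ ⟨m', n', hJ', hy', hz, he'⟩
    set p : Fin r → ℕ := n ⊔ m' with hp
    have hyp : y ∈ S.D p := hDC n m' ⟨hy, hy'⟩
    set a : Fin r → ℕ := p - n with ha
    set b : Fin r → ℕ := p - m' with hb
    have hpn : a + n = p := funext fun j => Nat.sub_add_cancel (le_max_left _ _)
    have hpm : b + m' = p := funext fun j => Nat.sub_add_cancel (le_max_right _ _)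
    have hyan : y ∈ S.D (a + n) := hpn ▸ hyp
    have hybm : y ∈ S.D (b + m') := hpm ▸ hyp
    rw [S.D_add] at hyan hybm
    have hxam : x ∈ S.D (a + m) := by
      rw [S.D_add]; exact ⟨hx, he ▸ hyan.2⟩
    have hzbn : z ∈ S.D (b + n') := by
      rw [S.D_add]; exact ⟨hz, he'.symm ▸ hybm.2⟩
    refine ⟨a + m, b + n', ?_, hxam, hzbn, ?_⟩
    · intro j hj
      obtain ⟨h1, h2⟩ := hJ j hj
      obtain ⟨h3, h4⟩ := hJ' j hj
      have : p j = max (n j) (m' j) := rfl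
      simp only [Pi.add_apply, ha, hb, Pi.sub_apply, this]
      omega
    · have e1 : S.T (a + m) x = S.T p y := by
        rw [S.T_add a m x hxam, he, ← S.T_add a n y (hpn ▸ hyp), hpn]
      have e2 : S.T (b + n') z = S.T p y := by
        rw [S.T_add b n' z hzbn, ← he', ← S.T_add b m' y (hpm ▸ hyp), hpm]
      rw [e1, e2]
  · -- monotonicity
    rintro N N' hNN' x _ y _ ⟨m, n, hJ, hx, hy, he⟩
    exact ⟨m, n, fun j hj => ⟨(hJ j hj).1, le_trans (hJ j hj).2 (hNN' j)⟩, hx, hy, he⟩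
  · -- union
    intro x _ y _
    constructor
    · rintro ⟨N, m, n, hJ, hx, hy, he⟩
      exact ⟨m, n, fun j hj => (hJ j hj).1, hx, hy, he⟩
    · rintro ⟨m, n, hJ, hx, hy, he⟩
      exact ⟨n, m, n, fun j hj => ⟨hJ j hj, le_refl _⟩, hx, hy, he⟩
end

section
/- Let (X, T, D) be a rank-r MGDS satisfying (DC), let J ⊆ {1,…,r}, let X_J = { x ∈ X : σ(x)_j = ∞ if and only if j ∈ J }, and let N ∈ ℕ^r. For x ∈ X_J let τ(x) ∈ ℕ^r be defined by τ(x)_j = σ(x)_j for j ∉ J (which is finite) and τ(x)_j = 0 for j ∈ J. Then for x, y ∈ X_J the following are equivalent: (a) there exist m, n ∈ ℕ^r with m_j = n_j ≤ N_j for all j ∈ J, x ∈ D m, y ∈ D n, and T m x = T n y; (b) there exists n ∈ ℕ^r with n_j = 0 for all j ∉ J and n_j ≤ N_j for all j ∈ J such that x ∈ D (n + τ(x)), y ∈ D (n + τ(y)), and T (n + τ(x)) x = T (n + τ(y)) y. -/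
theorem MGDS.D_antitone {r : ℕ} {X : Type*} (S : MGDS r X) {m k : Fin r → ℕ}
    (h : m ≤ k) : S.D k ⊆ S.D m := by
  have hk : k = (k - m) + m := by
    funext j
    simp [Nat.sub_add_cancel (h j)]
  rw [hk, S.D_add]
  exact fun x hx => hx.1

theorem MGDS.le_exitTime {r : ℕ} {X : Type*} (S : MGDS r X) {n : Fin r → ℕ} {x : X}
    (hn : x ∈ S.D n) (j : Fin r) : (n j : ℕ∞) ≤ S.exitTime x j :=
  le_iSup₂_of_le n hn le_rfl

theorem MGDS.exitTime_attained {r : ℕ} {X : Type*} (S : MGDS r X) {x : X} {j : Fin r}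
    {s : ℕ} (hs : S.exitTime x j = (s : ℕ∞)) : ∃ n, x ∈ S.D n ∧ n j = s := by
  rcases Nat.eq_zero_or_pos s with h0 | hpos
  · exact ⟨0, by simp [S.D_zero], by simp [h0]⟩
  · by_contra h
    push_neg at h
    have hb : ∀ n, x ∈ S.D n → n j ≤ s - 1 := by
      intro n hn
      have h1 : (n j : ℕ∞) ≤ (s : ℕ∞) := hs ▸ S.le_exitTime hn j
      have h2 : n j ≤ s := by exact_mod_cast h1
      exact Nat.le_pred_of_lt (lt_of_le_of_ne h2 (h n hn))
    have hle : S.exitTime x j ≤ ((s - 1 : ℕ) : ℕ∞) := by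
      refine iSup₂_le fun n hn => ?_
      exact_mod_cast hb n hn
    rw [hs] at hle
    have : s ≤ s - 1 := by exact_mod_cast hle
    omega

theorem MGDS.mem_D_finsetSup {r : ℕ} {X : Type*} (S : MGDS r X) (hDC : S.DC) {x : X}
    (s : Finset (Fin r)) (f : Fin r → (Fin r → ℕ)) (hf : ∀ j, x ∈ S.D (f j)) :
    x ∈ S.D (s.sup f) := by
  classical
  induction s using Finset.induction_on with
  | empty =>
    have hbot : ((∅ : Finset (Fin r)).sup f) = 0 := rfl
    rw [hbot, S.D_zero]
    trivial
  | insert _ _ hj ih =>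
    rw [Finset.sup_insert]
    exact hDC _ _ ⟨hf _, ih⟩

/-- in an MGDS with (DC), for `x, y ∈ X_J` and `N ∈ ℕ^r`, the
defining condition of `R_J^N` (existence of `m, n` with `m_j = n_j ≤ N_j` on `J`,
`x ∈ D m`, `y ∈ D n`, `T m x = T n y`) is equivalent to the normalized form:
existence of `n` supported on `J` with `n_j ≤ N_j` on `J` such that
`x ∈ D (n + τ(x))`, `y ∈ D (n + τ(y))` and `T (n + τ(x)) x = T (n + τ(y)) y`,
where `τ(x)_j = σ(x)_j` for `j ∉ J` (finite) and `τ(x)_j = 0` for `j ∈ J`. -/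
theorem mgds_RJN_normal_form
    {r : ℕ} {X : Type*} (S : MGDS r X) (hDC : S.DC) (J : Set (Fin r))
    (τ : X → (Fin r → ℕ))
    (hτ : ∀ x ∈ ({x | ∀ j, S.exitTime x j = ⊤ ↔ j ∈ J} : Set X), ∀ j,
      (j ∈ J → τ x j = 0) ∧ (j ∉ J → (τ x j : ℕ∞) = S.exitTime x j))
    (N : Fin r → ℕ) (x y : X)
    (hx : x ∈ ({x | ∀ j, S.exitTime x j = ⊤ ↔ j ∈ J} : Set X))
    (hy : y ∈ ({x | ∀ j, S.exitTime x j = ⊤ ↔ j ∈ J} : Set X)) :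
    (∃ m n : Fin r → ℕ, (∀ j ∈ J, m j = n j ∧ n j ≤ N j) ∧
      x ∈ S.D m ∧ y ∈ S.D n ∧ S.T m x = S.T n y) ↔
    (∃ n : Fin r → ℕ, (∀ j ∉ J, n j = 0) ∧ (∀ j ∈ J, n j ≤ N j) ∧
      x ∈ S.D (n + τ x) ∧ y ∈ S.D (n + τ y) ∧
      S.T (n + τ x) x = S.T (n + τ y) y) := by
  classical
  constructor
  · rintro ⟨m, n, hmn, hxm, hyn, hT⟩
    have hτx := hτ x hx
    have hτy := hτ y hy
    have hmτ : ∀ j ∉ J, m j ≤ τ x j := by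
      intro j hj
      have h1 := S.le_exitTime hxm j
      rw [← (hτx j).2 hj] at h1
      exact_mod_cast h1
    have hnτ : ∀ j ∉ J, n j ≤ τ y j := by
      intro j hj
      have h1 := S.le_exitTime hyn j
      rw [← (hτy j).2 hj] at h1
      exact_mod_cast h1
    set n' : Fin r → ℕ := fun j => if j ∈ J then m j else 0 with hn'def
    -- witnesses attaining the exit time of x off J
    have hwx : ∀ j, ∃ k : Fin r → ℕ, x ∈ S.D k ∧ (j ∉ J → k j = τ x j) := by
      intro j
      by_cases hj : j ∈ J
      · exact ⟨0, by rw [S.D_zero]; trivial, fun h => absurd hj h⟩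
      · obtain ⟨k, hk, hkj⟩ := S.exitTime_attained ((hτx j).2 hj).symm
        exact ⟨k, hk, fun _ => hkj⟩
    have hwy : ∀ j, ∃ k : Fin r → ℕ, y ∈ S.D k ∧ (j ∉ J → k j = τ y j) := by
      intro j
      by_cases hj : j ∈ J
      · exact ⟨0, by rw [S.D_zero]; trivial, fun h => absurd hj h⟩
      · obtain ⟨k, hk, hkj⟩ := S.exitTime_attained ((hτy j).2 hj).symm
        exact ⟨k, hk, fun _ => hkj⟩
    choose f hf1 hf2 using hwx
    choose g hg1 hg2 using hwy
    -- x ∈ D (n' + τ x)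
    have hxq : x ∈ S.D (m ⊔ Finset.univ.sup f) :=
      hDC _ _ ⟨hxm, S.mem_D_finsetSup hDC _ f hf1⟩
    have hxmem : x ∈ S.D (n' + τ x) := by
      refine S.D_antitone (fun j => ?_) hxq
      by_cases hj : j ∈ J
      · have h0 : τ x j = 0 := (hτx j).1 hj
        simp only [Pi.add_apply, Pi.sup_apply, hn'def, if_pos hj, h0]
        exact le_max_left _ _
      · have h1 : f j j ≤ (Finset.univ.sup f) j := by
          have := Finset.le_sup (f := f) (Finset.mem_univ j)
          exact this j
        simp only [Pi.add_apply, Pi.sup_apply, hn'def, if_neg hj, hf2 j hj] at h1 ⊢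
        omega
    have hyq : y ∈ S.D (n ⊔ Finset.univ.sup g) :=
      hDC _ _ ⟨hyn, S.mem_D_finsetSup hDC _ g hg1⟩
    have hymem : y ∈ S.D (n' + τ y) := by
      refine S.D_antitone (fun j => ?_) hyq
      by_cases hj : j ∈ J
      · have h0 : τ y j = 0 := (hτy j).1 hj
        have hmn' := (hmn j hj).1
        simp only [Pi.add_apply, Pi.sup_apply, hn'def, if_pos hj, h0, hmn']
        exact Nat.le_max_left _ _
      · have h1 : g j j ≤ (Finset.univ.sup g) j := by
          have := Finset.le_sup (f := g) (Finset.mem_univ j)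
          exact this j
        simp only [Pi.add_apply, Pi.sup_apply, hn'def, if_neg hj, hg2 j hj] at h1 ⊢
        omega
    -- remainders
    set a : Fin r → ℕ := fun j => if j ∈ J then 0 else τ x j - m j with hadef
    set b : Fin r → ℕ := fun j => if j ∈ J then 0 else τ y j - n j with hbdef
    have heqx : n' + τ x = a + m := by
      funext j
      by_cases hj : j ∈ J
      · have h0 : τ x j = 0 := (hτx j).1 hj
        simp [hn'def, hadef, if_pos hj, h0]
      · have := hmτ j hj
        simp only [Pi.add_apply, hn'def, hadef, if_neg hj]
        omega
    have heqy : n' + τ y = b + n := by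
      funext j
      by_cases hj : j ∈ J
      · have h0 : τ y j = 0 := (hτy j).1 hj
        simp [hn'def, hbdef, if_pos hj, h0, (hmn j hj).1]
      · have := hnτ j hj
        simp only [Pi.add_apply, hn'def, hbdef, if_neg hj]
        omega
    have hxam : x ∈ S.D (a + m) := heqx ▸ hxmem
    have hybn : y ∈ S.D (b + n) := heqy ▸ hymem
    have hza : S.T m x ∈ S.D a := by
      have := hxam
      rw [S.D_add] at this
      exact this.2
    have hzb : S.T n y ∈ S.D b := by
      have := hybn
      rw [S.D_add] at this
      exact this.2
    -- upper bounds on exit time of z := T m x = T n y off J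
    have hub_a : ∀ j ∉ J, ∀ c : Fin r → ℕ, S.T m x ∈ S.D c → c j ≤ a j := by
      intro j hj c hc
      have hxc : x ∈ S.D (c + m) := by
        rw [S.D_add]
        exact ⟨hxm, hc⟩
      have h1 := S.le_exitTime hxc j
      rw [← (hτx j).2 hj] at h1
      have h2 : c j + m j ≤ τ x j := by exact_mod_cast h1
      simp only [hadef, if_neg hj]
      omega
    have hub_b : ∀ j ∉ J, ∀ c : Fin r → ℕ, S.T n y ∈ S.D c → c j ≤ b j := by
      intro j hj c hc
      have hyc : y ∈ S.D (c + n) := by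
        rw [S.D_add]
        exact ⟨hyn, hc⟩
      have h1 := S.le_exitTime hyc j
      rw [← (hτy j).2 hj] at h1
      have h2 : c j + n j ≤ τ y j := by exact_mod_cast h1
      simp only [hbdef, if_neg hj]
      omega
    have hab : a = b := by
      funext j
      by_cases hj : j ∈ J
      · simp [hadef, hbdef, if_pos hj]
      · refine le_antisymm ?_ ?_
        · exact hub_b j hj a (hT ▸ hza)
        · exact hub_a j hj b (hT ▸ hzb)
    refine ⟨n', fun j hj => by simp [hn'def, if_neg hj], fun j hj => ?_, hxmem, hymem, ?_⟩
    · simp only [hn'def, if_pos hj]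
      exact (hmn j hj).1 ▸ (hmn j hj).2
    · have e1 : S.T (n' + τ x) x = S.T a (S.T m x) := by
        rw [heqx]
        exact S.T_add a m x hxam
      have e2 : S.T (n' + τ y) y = S.T b (S.T n y) := by
        rw [heqy]
        exact S.T_add b n y hybn
      rw [e1, e2, hT, hab]
  · rintro ⟨n, hn0, hnN, hx1, hy1, hT⟩
    refine ⟨n + τ x, n + τ y, fun j hj => ?_, hx1, hy1, hT⟩
    have h1 : τ x j = 0 := ((hτ x hx j).1) hj
    have h2 : τ y j = 0 := ((hτ y hy j).1) hj
    constructor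
    · simp [Pi.add_apply, h1, h2]
    · simp only [Pi.add_apply, h2]
      simpa using hnN j hj
end

section
/- Let α be a nonempty type and let X be the free monoid on α (words in the letters of α, with empty word Ω). For (a,b) ∈ ℕ² let D (a,b) = { w ∈ X : a + b ≤ length(w) } and let T (a,b) w be the word obtained from w by deleting its first a letters and its last b letters. Then: (1) this data satisfies the MGDS axioms of rank 2; (2) the domain condition (DC) fails: every one-letter word lies in D (1,0) ∩ D (0,1) but not in D (1,1); (3) the set G = { (x, z, y) ∈ X × ℤ² × X : ∃ m n ∈ ℕ², x ∈ D m, y ∈ D n, z = m − n, T m x = T n y } is not closed under the composition (x,z,y)(y,z',w) = (x, z+z', w): for all nonempty words x, y one has (x, (length x, −length y), y) ∈ G and (y, (length y, 0), Ω) ∈ G, but (x, (length x + length y, −length y), Ω) ∉ G. -/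
/-- Domains for the two-sided shift on the free monoid (words = lists):
`D (a,b) = {w : a + b ≤ length w}`. -/
def wordD (α : Type*) (n : Fin 2 → ℕ) : Set (List α) := {w | n 0 + n 1 ≤ w.length}

/-- `T (a,b)` deletes the first `a` letters and the last `b` letters of a word. -/
def wordT (α : Type*) (n : Fin 2 → ℕ) (w : List α) : List α := (w.drop (n 0)).rdrop (n 1)

/-- The semidirect product set `G` of the system `(L,R)` on the free monoid. -/
def wordG (α : Type*) : Set (List α × (Fin 2 → ℤ) × List α) :=
  {p | ∃ m n : Fin 2 → ℕ, p.1 ∈ wordD α m ∧ p.2.2 ∈ wordD α n ∧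
    p.2.1 = (fun i => (m i : ℤ) - (n i : ℤ)) ∧ wordT α m p.1 = wordT α n p.2.2}

/-- for the left/right deletion system on the free monoid on a
nonempty alphabet `α`: (1) the data `(wordD, wordT)` satisfies the rank-2 MGDS
axioms; (2) the domain condition (DC) fails: a one-letter word lies in
`D (1,0) ∩ D (0,1)` but not in `D ((1,0) ⊔ (0,1)) = D (1,1)`; and (3) the
semidirect product set `G` is not closed under the groupoid composition:
`(x, (|x|,-|y|), y) ∈ G` and `(y,(|y|,0),Ω) ∈ G` but
`(x, (|x|+|y|, -|y|), Ω) ∉ G` for nonempty words `x, y`. -/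
theorem free_monoid_shifts_fail_DC_and_G_not_closed (α : Type*) [Nonempty α] :
    (∃ S : MGDS 2 (List α), S.D = wordD α ∧ S.T = wordT α) ∧
    (∀ a : α, [a] ∈ wordD α ![1, 0] ∩ wordD α ![0, 1] ∧
      [a] ∉ wordD α (![1, 0] ⊔ ![0, 1])) ∧
    (∀ x y : List α, x ≠ [] → y ≠ [] →
      (x, ![(x.length : ℤ), -(y.length : ℤ)], y) ∈ wordG α ∧
      (y, ![(y.length : ℤ), 0], ([] : List α)) ∈ wordG α ∧
      (x, ![(x.length : ℤ) + (y.length : ℤ), -(y.length : ℤ)], ([] : List α)) ∉ wordG α) := by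
  refine ⟨⟨⟨wordD α, wordT α, ?_, ?_, ?_, ?_⟩, rfl, rfl⟩, ?_, ?_⟩
  · ext w; simp [wordD]
  · intro x; simp [wordT]
  · intro m n
    ext w
    simp only [wordD, wordT, List.rdrop, Set.mem_setOf_eq, Pi.add_apply, List.length_take,
      List.length_drop, Set.mem_sep_iff]
    omega
  · intro m n x hx
    simp only [wordD, Set.mem_setOf_eq, Pi.add_apply] at hx
    simp only [wordT, List.rdrop, List.length_drop, List.drop_take, List.drop_drop,
      List.take_take, List.length_take, Pi.add_apply]
    congr 1
    · omega
    · congr 1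
      omega
  · intro a
    refine ⟨⟨?_, ?_⟩, ?_⟩ <;> simp [wordD]
  · intro x y hx hy
    have hx' : 1 ≤ x.length := List.length_pos_iff.mpr hx
    have hy' : 1 ≤ y.length := List.length_pos_iff.mpr hy
    refine ⟨⟨![x.length, 0], ![0, y.length], ?_, ?_, ?_, ?_⟩,
      ⟨![y.length, 0], ![0, 0], ?_, ?_, ?_, ?_⟩, ?_⟩
    · simp [wordD]
    · simp [wordD]
    · funext i; fin_cases i <;> simp
    · simp [wordT, List.rdrop]
    · simp [wordD]
    · simp [wordD]
    · funext i; fin_cases i <;> simp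
    · simp [wordT, List.rdrop]
    · rintro ⟨m, n, hm, hn, hz, -⟩
      simp only [wordD, Set.mem_setOf_eq, List.length_nil] at hm hn
      have h0 := congrFun hz 0
      have h1 := congrFun hz 1
      simp at h0 h1
      omega
end

section
/- Let C and D be groupoids (categories in which every morphism is an isomorphism) and let F : C ⥤ D be a functor such that: (a) F is surjective on morphisms, i.e. for all objects u, v of D and every morphism g : u ⟶ v there are objects a, b of C, a morphism f : a ⟶ b, and equalities F(a) = u, F(b) = v identifying F(f) with g; and (b) whenever f : a ⟶ b and g : c ⟶ d are morphisms of C with F(b) = F(c), then b = c (composable pairs lift only to composable pairs). Then F is bijective on objects; moreover, for every object a of C, every morphism of C whose image under F has source F(a) itself has source a, and F maps the set of morphisms of C with source a onto the set of morphisms of D with source F(a). -/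
open CategoryTheory

/-- let `F : C ⥤ D` be a functor between groupoids which is
(a) surjective on morphisms (up to the equalities of objects `F a = u`,
`F b = v`, via transport with `eqToHom`), and such that (b) composable pairs
lift only to composable pairs: whenever `f : a ⟶ b` and `g : c ⟶ d` in `C` with
`F b = F c`, then `b = c`.  Then `F` is bijective on objects; every morphism of
`C` whose image has source `F a` itself has source `a`; and `F` maps the
morphisms with source `a` onto the morphisms of `D` with source `F a`. -/
theorem groupoid_functor_composable_lifting
    {C D : Type*} [Groupoid C] [Groupoid D] (F : C ⥤ D)
    (hsurj : ∀ (u v : D) (g : u ⟶ v), ∃ (a b : C) (f : a ⟶ b)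
      (ha : F.obj a = u) (hb : F.obj b = v),
      F.map f = eqToHom ha ≫ g ≫ eqToHom hb.symm)
    (hcomp : ∀ (a b c d : C), (a ⟶ b) → (c ⟶ d) → F.obj b = F.obj c → b = c) :
    Function.Bijective F.obj ∧
    (∀ (a b c : C), (b ⟶ c) → F.obj b = F.obj a → b = a) ∧
    (∀ (a : C) (v : D) (g : F.obj a ⟶ v), ∃ (b : C) (f : a ⟶ b)
      (hb : F.obj b = v), F.map f = g ≫ eqToHom hb.symm) := by
  have key : ∀ (a b c : C), (b ⟶ c) → F.obj b = F.obj a → b = a := by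
    intro a b c h hF
    exact hcomp c b a a (Groupoid.inv h) (𝟙 a) hF
  have hinj : Function.Injective F.obj := by
    intro a b h
    exact key b a a (𝟙 a) h
  refine ⟨⟨hinj, ?_⟩, key, ?_⟩
  · intro u
    obtain ⟨a, b, f, ha, hb, -⟩ := hsurj u u (𝟙 u)
    exact ⟨a, ha⟩
  · intro a v g
    obtain ⟨a', b, f, ha, hb, hf⟩ := hsurj (F.obj a) v g
    obtain rfl : a' = a := hinj ha
    refine ⟨b, f, hb, ?_⟩
    simpa using hf
end
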